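/- arXiv:2312.03334 — 2 statements merged into one kernel-verified Lean document; each statement's English description precedes it below -/
import Mathlib

section
/- Let A be a connected graph, let T be a tree, and let p : T → A be a covering morphism. Then there exists an isomorphism φ : T → T_A such that π ∘ φ = p (i.e. π₀ ∘ φ₀ = p₀ on vertices and π₁ ∘ φ₁ = p₁ on edges), where π : T_A → A is the universal covering morphism. In particular, up to isomorphism T_A is the unique tree admitting a covering morphism onto A. -/
/-- A rooted directed multigraph. -/
structure RGraph where
  V : Type
  E : Type
  s : E → V
  t : E → V
  root : V

namespace RGraph

/-- `l` is a path: consecutive edges are composable. -/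
def IsPath (A : RGraph) (l : List A.E) : Prop :=
  l.IsChain (fun e f => A.t e = A.s f)

/-- `l` is a path starting at the vertex `q`. -/
def PathFrom (A : RGraph) (q : A.V) (l : List A.E) : Prop :=
  A.IsPath l ∧ ∀ e ∈ l.head?, A.s e = q

/-- The target of the path `l` started at `q` (equal to `q` for the empty path). -/
def pathTarget (A : RGraph) (q : A.V) (l : List A.E) : A.V :=
  l.foldl (fun _ e => A.t e) q

@[simp] lemma pathTarget_nil (A : RGraph) (q : A.V) : A.pathTarget q [] = q := rfl

@[simp] lemma pathTarget_cons (A : RGraph) (q : A.V) (a : A.E) (l : List A.E) :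
    A.pathTarget q (a :: l) = A.pathTarget (A.t a) l := rfl

lemma pathTarget_append (A : RGraph) (q : A.V) (l l' : List A.E) :
    A.pathTarget q (l ++ l') = A.pathTarget (A.pathTarget q l) l' := by
  simp [pathTarget]

@[simp] lemma pathTarget_append_single (A : RGraph) (q : A.V) (l : List A.E) (e : A.E) :
    A.pathTarget q (l ++ [e]) = A.t e := by
  rw [pathTarget_append]; rfl

lemma pathFrom_nil (A : RGraph) (q : A.V) : A.PathFrom q [] :=
  ⟨List.isChain_nil, by simp⟩

lemma pathTarget_getLast {A : RGraph} {q : A.V} {l : List A.E} {x : A.E}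
    (hx : x ∈ l.getLast?) : A.pathTarget q l = A.t x := by
  induction l generalizing q with
  | nil => simp at hx
  | cons a l ih =>
    cases l with
    | nil => simp at hx; subst hx; rfl
    | cons b l =>
      rw [List.getLast?_cons_cons] at hx
      simpa using ih (q := A.t a) hx

lemma pathFrom_append_single {A : RGraph} {q : A.V} {l : List A.E} {e : A.E}
    (h : A.PathFrom q l) (he : A.s e = A.pathTarget q l) :
    A.PathFrom q (l ++ [e]) := by
  constructor
  · apply List.isChain_append.mpr
    refine ⟨h.1, List.isChain_singleton _, ?_⟩
    intro x hx y hy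
    simp at hy
    subst hy
    rw [he]
    exact (pathTarget_getLast hx).symm
  · intro f hf
    cases l with
    | nil =>
      simp at hf
      subst hf
      simpa using he
    | cons a l =>
      simp at hf
      subst hf
      exact h.2 a (by simp)

/-- `w` is reachable from `q` by an oriented path. -/
def Reach (A : RGraph) (q w : A.V) : Prop :=
  ∃ l, A.PathFrom q l ∧ A.pathTarget q l = w

lemma reach_self (A : RGraph) (q : A.V) : A.Reach q q :=
  ⟨[], A.pathFrom_nil q, rfl⟩

lemma reach_target {A : RGraph} {q : A.V} {e : A.E} (h : A.Reach q (A.s e)) :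
    A.Reach q (A.t e) := by
  obtain ⟨l, hl, ht⟩ := h
  exact ⟨l ++ [e], pathFrom_append_single hl ht.symm, by simp⟩

/-- A graph is connected (as a rooted directed graph) if every vertex is reachable
from the root. -/
def Connected (A : RGraph) : Prop := ∀ w : A.V, A.Reach A.root w

/-- A graph is a tree if the target map from paths emanating from the root to
vertices is a bijection. -/
def IsTree (A : RGraph) : Prop :=
  Function.Bijective
    (fun l : {l : List A.E // A.PathFrom A.root l} => A.pathTarget A.root l.1)

/-- A graph is locally finite if every vertex has finitely many outgoing edges. -/
def LocallyFinite (A : RGraph) : Prop := ∀ q : A.V, Finite {e : A.E // A.s e = q}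

/-- Adjacency: there is an edge from `v` to `w`. -/
def Adj (A : RGraph) (v w : A.V) : Prop := ∃ e, A.s e = v ∧ A.t e = w

/-- The induced rooted subgraph on all vertices reachable from `q` (the "cone" at `q`). -/
def subgraph (A : RGraph) (q : A.V) : RGraph where
  V := {w // A.Reach q w}
  E := {e // A.Reach q (A.s e)}
  s := fun e => ⟨A.s e.1, e.2⟩
  t := fun e => ⟨A.t e.1, reach_target e.2⟩
  root := ⟨q, A.reach_self q⟩

/-- The truncation of the cone at `v` to vertices at distance at most `d` from `v`. -/
def trunc (A : RGraph) (v : A.V) (d : ℕ) : RGraph where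
  V := {w // ∃ l, A.PathFrom v l ∧ A.pathTarget v l = w ∧ l.length ≤ d}
  E := {e // ∃ l, A.PathFrom v l ∧ A.pathTarget v l = A.s e ∧ l.length < d}
  s := fun e => ⟨A.s e.1, e.2.imp fun _ h => ⟨h.1, h.2.1, h.2.2.le⟩⟩
  t := fun e => ⟨A.t e.1, by
    obtain ⟨l, h1, h2, h3⟩ := e.2
    exact ⟨l ++ [e.1], pathFrom_append_single h1 h2.symm, by simp,
      by simp only [List.length_append, List.length_singleton]; omega⟩⟩
  root := ⟨v, [], A.pathFrom_nil v, rfl, Nat.zero_le d⟩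

/-- The universal covering tree of `A`: vertices are the paths emanating from the root. -/
def cover (A : RGraph) : RGraph where
  V := {l : List A.E // A.PathFrom A.root l}
  E := {x : {l : List A.E // A.PathFrom A.root l} × A.E //
          A.s x.2 = A.pathTarget A.root x.1.1}
  s := fun x => x.1.1
  t := fun x => ⟨x.1.1.1 ++ [x.1.2], pathFrom_append_single x.1.1.2 x.2⟩
  root := ⟨[], A.pathFrom_nil _⟩

end RGraph

/-- A morphism of rooted directed multigraphs. -/
structure GraphHom (A B : RGraph) where
  v : A.V → B.V
  e : A.E → B.E
  root_eq : v A.root = B.root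
  s_eq : ∀ x, B.s (e x) = v (A.s x)
  t_eq : ∀ x, B.t (e x) = v (A.t x)

namespace GraphHom

variable {A B : RGraph}

/-- The unique path lifting property. -/
def UPLP (p : GraphHom A B) : Prop :=
  ∀ (q : A.V) (l' : List B.E), B.PathFrom (p.v q) l' →
    ∃! l : List A.E, A.PathFrom q l ∧ l.map p.e = l'

/-- A covering morphism: surjective on vertices, with the unique path lifting property. -/
def IsCovering (p : GraphHom A B) : Prop := Function.Surjective p.v ∧ p.UPLP

/-- An isomorphism of graphs: bijective on vertices and on edges. -/
def IsIso (p : GraphHom A B) : Prop := Function.Bijective p.v ∧ Function.Bijective p.e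

/-- The restriction of the edge map to the edges emanating from `q`. -/
def outMap (p : GraphHom A B) (q : A.V) :
    {e : A.E // A.s e = q} → {e' : B.E // B.s e' = p.v q} :=
  fun e => ⟨p.e e.1, by rw [p.s_eq, e.2]⟩

lemma isPath_map (p : GraphHom A B) {l : List A.E} (h : A.IsPath l) :
    B.IsPath (l.map p.e) := by
  rw [RGraph.IsPath, List.isChain_map]
  exact List.IsChain.imp (fun a b hab => by rw [p.t_eq, p.s_eq, hab]) h

lemma pathFrom_map (p : GraphHom A B) {q : A.V} {l : List A.E} (h : A.PathFrom q l) :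
    B.PathFrom (p.v q) (l.map p.e) := by
  refine ⟨p.isPath_map h.1, ?_⟩
  intro f hf
  cases l with
  | nil => simp at hf
  | cons a l =>
    simp at hf
    subst hf
    rw [p.s_eq, h.2 a (by simp)]

lemma pathTarget_map (p : GraphHom A B) (q : A.V) (l : List A.E) :
    B.pathTarget (p.v q) (l.map p.e) = p.v (A.pathTarget q l) := by
  induction l generalizing q with
  | nil => rfl
  | cons a l ih =>
    show B.pathTarget (B.t (p.e a)) (l.map p.e) = _
    rw [p.t_eq]
    exact ih (A.t a)

lemma reach_map (p : GraphHom A B) {q w : A.V} (h : A.Reach q w) :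
    B.Reach (p.v q) (p.v w) := by
  obtain ⟨l, hl, ht⟩ := h
  exact ⟨l.map p.e, p.pathFrom_map hl, by rw [p.pathTarget_map, ht]⟩

end GraphHom

/-- Two graphs are isomorphic. -/
def RGraph.Iso (A B : RGraph) : Prop := ∃ p : GraphHom A B, p.IsIso

/-- The universal covering morphism from the universal covering tree of `A` to `A`. -/
def RGraph.uCover (A : RGraph) : GraphHom A.cover A where
  v := fun l => A.pathTarget A.root l.1
  e := fun x => x.1.2
  root_eq := rfl
  s_eq := fun x => x.2
  t_eq := fun x => by
    show A.t x.1.2 = A.pathTarget A.root (x.1.1.1 ++ [x.1.2])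
    simp

/-- The morphism induced between universal covering trees by a morphism of graphs. -/
def GraphHom.coverMap {A B : RGraph} (p : GraphHom A B) : GraphHom A.cover B.cover where
  v := fun l => ⟨l.1.map p.e, by have := p.pathFrom_map l.2; rwa [p.root_eq] at this⟩
  e := fun x =>
    ⟨(⟨x.1.1.1.map p.e, by have := p.pathFrom_map x.1.1.2; rwa [p.root_eq] at this⟩,
      p.e x.1.2), by
        show B.s (p.e x.1.2) = B.pathTarget B.root (x.1.1.1.map p.e)
        rw [p.s_eq, x.2, ← p.root_eq, p.pathTarget_map]⟩
  root_eq := Subtype.ext rfl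
  s_eq := fun _ => rfl
  t_eq := fun x => by
    apply Subtype.ext
    simp [RGraph.cover]

/-- `A` is a covering quotient of `T`. -/
def IsCovQuotient (T A : RGraph) : Prop := ∃ p : GraphHom T A, p.IsCovering

/-- `A` is a minimal covering quotient of `T`: a covering quotient with the minimal
number of vertices among all covering quotients of `T`. -/
def IsMinCovQuotient (T A : RGraph) : Prop :=
  IsCovQuotient T A ∧
    ∀ B : RGraph, IsCovQuotient T B → Cardinal.mk A.V ≤ Cardinal.mk B.V

/-- `T` has finitely many cone types. -/
def FinManyCones (T : RGraph) : Prop :=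
  ∃ S : Set T.V, S.Finite ∧ ∀ v : T.V, ∃ w ∈ S, RGraph.Iso (T.subgraph v) (T.subgraph w)

/-- A self-similar tree: a locally finite tree with finitely many cone types. -/
def SelfSimilarTree (T : RGraph) : Prop := T.IsTree ∧ T.LocallyFinite ∧ FinManyCones T

namespace RGraph

/-- The automorphism group of a graph, realized as the group of root-preserving,
adjacency-preserving permutations of the vertex set (for trees this is the same as the
automorphism group in the sense of graph morphisms, since in a tree an edge is determined
by its endpoints). -/
def autGroup (T : RGraph) : Subgroup (Equiv.Perm T.V) where
  carrier := {g | g T.root = T.root ∧ ∀ v w, T.Adj v w ↔ T.Adj (g v) (g w)}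
  one_mem' := ⟨rfl, fun _ _ => Iff.rfl⟩
  mul_mem' := by
    rintro a b ⟨ha1, ha2⟩ ⟨hb1, hb2⟩
    refine ⟨?_, fun v w => ?_⟩
    · show a (b T.root) = T.root
      rw [hb1, ha1]
    · exact (hb2 v w).trans (ha2 (b v) (b w))
  inv_mem' := by
    rintro a ⟨ha1, ha2⟩
    refine ⟨?_, fun v w => ?_⟩
    · show a.symm T.root = T.root
      rw [Equiv.symm_apply_eq]
      exact ha1.symm
    · have h := ha2 (a⁻¹ v) (a⁻¹ w)
      simpa using h.symm

/-- The subgroup of permutations of the vertices fixing every vertex outside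
of the cone at `v`. -/
def fixOutside (T : RGraph) (v : T.V) : Subgroup (Equiv.Perm T.V) where
  carrier := {g | ∀ w, ¬ T.Reach v w → g w = w}
  one_mem' := fun _ _ => rfl
  mul_mem' := by
    intro a b ha hb w hw
    show a (b w) = w
    rw [hb w hw, ha w hw]
  inv_mem' := by
    intro a ha w hw
    show a.symm w = w
    rw [Equiv.symm_apply_eq]
    exact (ha w hw).symm

/-- The rigid stabilizer of the vertex `v`: automorphisms fixing every vertex
outside the subtree spanned by `v` and its descendants. -/
def rist (T : RGraph) (v : T.V) : Subgroup (Equiv.Perm T.V) :=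
  T.autGroup ⊓ T.fixOutside v

/-- The set of vertices at distance `n` from the root. -/
def level (T : RGraph) (n : ℕ) : Set T.V :=
  {v | ∃ l : List T.E, T.PathFrom T.root l ∧ T.pathTarget T.root l = v ∧ l.length = n}

/-- The `n`-th rigid level stabilizer: the subgroup generated by the rigid stabilizers
of the vertices at distance `n` from the root. -/
def ristLevel (T : RGraph) (n : ℕ) : Subgroup (Equiv.Perm T.V) :=
  ⨆ v ∈ T.level n, T.rist v

/-- The `n`-th rigid level stabilizer, as a subgroup of the automorphism group. -/
def ristIn (T : RGraph) (n : ℕ) : Subgroup ↥T.autGroup :=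
  (T.ristLevel n).comap T.autGroup.subtype

end RGraph

/-- A recurrent double edge: a pair of distinct parallel edges such that there is an
oriented loop which contains one of them, or from which their common source can be
reached. -/
def HasRecDoubleEdge (A : RGraph) : Prop :=
  ∃ e₁ e₂ : A.E, e₁ ≠ e₂ ∧ A.s e₁ = A.s e₂ ∧ A.t e₁ = A.t e₂ ∧
    ((∃ (q : A.V) (l : List A.E),
        A.PathFrom q l ∧ l ≠ [] ∧ A.pathTarget q l = q ∧ (e₁ ∈ l ∨ e₂ ∈ l)) ∨
     (∃ (q : A.V) (l : List A.E),
        A.PathFrom q l ∧ l ≠ [] ∧ A.pathTarget q l = q ∧ A.Reach q (A.s e₁)))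

/-- A deterministic finite automaton over the alphabet `A`, with a partial transition
function, a single initial state, and all states accepting. -/
structure PDFA (A : Type) where
  Q : Type
  finQ : Finite Q
  neQ : Nonempty Q
  δ : Q → A → Option Q
  init : Q

namespace PDFA

variable {A : Type} (M : PDFA A)

/-- Running the automaton from state `q` on a word; `none` if it gets stuck. -/
def run : M.Q → List A → Option M.Q
  | q, [] => some q
  | q, a :: w => (M.δ q a).bind fun q' => run q' w

/-- The regular language accepted by `M`. -/
def Lang : Set (List A) := {w | (M.run M.init w).isSome}

lemma run_append (q : M.Q) (u w : List A) :
    M.run q (u ++ w) = (M.run q u).bind fun q' => M.run q' w := by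
  induction u generalizing q with
  | nil => simp [run]
  | cons a u ih =>
    simp only [List.cons_append, run]
    cases M.δ q a with
    | none => simp
    | some q' => simp [ih]

lemma isSome_of_append {q : M.Q} {u w : List A}
    (h : (M.run q (u ++ w)).isSome) : (M.run q u).isSome := by
  rw [run_append] at h
  cases hu : M.run q u with
  | none => rw [hu] at h; simp at h
  | some q' => simp

/-- The path language tree of `M`: the tree whose vertices are the words of the
language of `M`, with an edge from `w` to `w ++ [a]` whenever both belong to the
language. -/
def pathTree : RGraph where
  V := {w : List A // (M.run M.init w).isSome}
  E := {x : List A × A // (M.run M.init (x.1 ++ [x.2])).isSome}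
  s := fun x => ⟨x.1.1, M.isSome_of_append x.2⟩
  t := fun x => ⟨x.1.1 ++ [x.1.2], x.2⟩
  root := ⟨[], by simp [run]⟩

/-- The underlying rooted directed multigraph of the automaton `M`. -/
def underlying : RGraph where
  V := M.Q
  E := {x : M.Q × A // (M.δ x.1 x.2).isSome}
  s := fun x => x.1.1
  t := fun x => (M.δ x.1.1 x.1.2).get x.2
  root := M.init

/-- `M` is geometrically minimal: it has the minimal number of states among all DFAs
(over arbitrary finite nonempty alphabets) whose path language trees are isomorphic,
as unlabelled rooted trees, to the path language tree of `M`. -/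
def GeomMinimal : Prop :=
  ∀ (B : Type), Finite B → Nonempty B → ∀ N : PDFA B,
    RGraph.Iso M.pathTree N.pathTree → Nat.card M.Q ≤ Nat.card N.Q

/-- The state reached after reading the word `w` of the language. -/
def qstate (w : List A) (h : (M.run M.init w).isSome) : M.Q :=
  (M.run M.init w).get h

/-- The group of admissible permutations at the state `q`: permutations `τ` of the
alphabet fixing the letters outside `Σ(q)` and satisfying `δ(q, τ a) = δ(q, a)`. -/
def SymQ (q : M.Q) : Subgroup (Equiv.Perm A) where
  carrier := {τ | ∀ a, M.δ q (τ a) = M.δ q a ∧ (M.δ q a = none → τ a = a)}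
  one_mem' := fun _ => ⟨rfl, fun _ => rfl⟩
  mul_mem' := by
    intro τ₁ τ₂ h1 h2 a
    constructor
    · show M.δ q (τ₁ (τ₂ a)) = M.δ q a
      rw [(h1 (τ₂ a)).1, (h2 a).1]
    · intro hn
      show τ₁ (τ₂ a) = a
      rw [(h2 a).2 hn, (h1 a).2 hn]
  inv_mem' := by
    intro τ h a
    have h1 := (h (τ.symm a)).1
    rw [Equiv.apply_symm_apply] at h1
    constructor
    · show M.δ q (τ.symm a) = M.δ q a
      exact h1.symm
    · intro hn
      have h2 := (h (τ.symm a)).2 (h1.symm.trans hn)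
      rw [Equiv.apply_symm_apply] at h2
      show τ.symm a = a
      exact h2.symm

end PDFA

/-- Extending a portrait to a map on words (the first argument is the accumulated
prefix): the `i`-th letter of the image word is the image of the `i`-th letter under
the local injection at the prefix of length `i - 1`. -/
def portraitExtend {A : Type} (σ : List A → A → A) : List A → List A → List A
  | _, [] => []
  | pre, a :: w => σ pre a :: portraitExtend σ (pre ++ [a]) w

lemma myPathFrom_tail {A : RGraph} {q : A.V} {a : A.E} {l : List A.E}
    (h : A.PathFrom q (a :: l)) : A.PathFrom (A.t a) l := by
  obtain ⟨h1, _⟩ := h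
  rw [RGraph.IsPath, List.isChain_cons] at h1
  exact ⟨h1.2, fun e he => (h1.1 e he).symm⟩

lemma myPathFrom_of_append {A : RGraph} {q : A.V} {l l' : List A.E}
    (h : A.PathFrom q (l ++ l')) : A.PathFrom q l := by
  refine ⟨(List.isChain_append.mp h.1).1, fun e he => h.2 e ?_⟩
  cases l with
  | nil => simp at he
  | cons a m => simpa using he

lemma my_s_getLast {A : RGraph} {q : A.V} {m : List A.E} {e : A.E}
    (h : A.PathFrom q (m ++ [e])) : A.s e = A.pathTarget q m := by
  induction m generalizing q with
  | nil => simpa using h.2 e (by simp)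
  | cons a m ih =>
    simpa using ih (myPathFrom_tail h)

/-- If `A` is connected, `T` is a tree and `p : T → A` is a covering
morphism, then there is an isomorphism `φ : T → T_A` intertwining `p` with the
universal covering morphism `π : T_A → A`. In particular, up to isomorphism, `T_A` is
the unique tree covering `A`. -/
theorem stmt5 (A T : RGraph) (hA : A.Connected) (hT : T.IsTree)
    (p : GraphHom T A) (hp : p.IsCovering) :
    ∃ φ : GraphHom T A.cover, φ.IsIso ∧
      (∀ x : T.V, A.uCover.v (φ.v x) = p.v x) ∧
      (∀ x : T.E, A.uCover.e (φ.e x) = p.e x) := by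
  obtain ⟨hsurj, huplp⟩ := hp
  set F := Equiv.ofBijective _ hT with hFdef
  have hF : ∀ x : T.V, T.pathTarget T.root (F.symm x).1 = x := fun x => F.apply_symm_apply x
  have hFu : ∀ l : {l : List T.E // T.PathFrom T.root l},
      F.symm (T.pathTarget T.root l.1) = l := fun l => F.symm_apply_apply l
  have key : ∀ e : T.E, (F.symm (T.t e)).1 = (F.symm (T.s e)).1 ++ [e] := by
    intro e
    have hpath : T.PathFrom T.root ((F.symm (T.s e)).1 ++ [e]) :=
      RGraph.pathFrom_append_single (F.symm (T.s e)).2 (hF _).symm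
    have h2 := hFu ⟨_, hpath⟩
    rw [show T.pathTarget T.root ((F.symm (T.s e)).1 ++ [e]) = T.t e by simp] at h2
    exact congrArg Subtype.val h2
  refine ⟨{
    v := fun x => ⟨(F.symm x).1.map p.e, by
      have := p.pathFrom_map (F.symm x).2; rwa [p.root_eq] at this⟩
    e := fun e => ⟨(⟨(F.symm (T.s e)).1.map p.e, by
        have := p.pathFrom_map (F.symm (T.s e)).2; rwa [p.root_eq] at this⟩, p.e e), by
      show A.s (p.e e) = A.pathTarget A.root ((F.symm (T.s e)).1.map p.e)
      rw [p.s_eq, ← p.root_eq, p.pathTarget_map, hF]⟩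
    root_eq := by
      have h0 : F.symm T.root = ⟨[], T.pathFrom_nil _⟩ := hFu ⟨[], T.pathFrom_nil _⟩
      apply Subtype.ext
      show (F.symm T.root).1.map p.e = []
      rw [h0]
      rfl
    s_eq := fun e => rfl
    t_eq := fun e => by
      apply Subtype.ext
      show (F.symm (T.s e)).1.map p.e ++ [p.e e] = (F.symm (T.t e)).1.map p.e
      rw [key e, List.map_append]
      rfl }, ⟨?_, ?_⟩, ?_, ?_⟩
  · constructor
    · intro x y hxy
      have hmapeq : (F.symm x).1.map p.e = (F.symm y).1.map p.e := congrArg Subtype.val hxy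
      have hl' : A.PathFrom (p.v T.root) ((F.symm x).1.map p.e) := by
        rw [p.root_eq]
        have := p.pathFrom_map (F.symm x).2; rwa [p.root_eq] at this
      obtain ⟨l0, _, hu⟩ := huplp T.root _ hl'
      have e1 : (F.symm x).1 = l0 := hu _ ⟨(F.symm x).2, rfl⟩
      have e2 : (F.symm y).1 = l0 := hu _ ⟨(F.symm y).2, hmapeq.symm⟩
      rw [← hF x, ← hF y, e1, e2]
    · rintro ⟨l', hl'⟩
      have hl'' : A.PathFrom (p.v T.root) l' := by rw [p.root_eq]; exact hl'
      obtain ⟨l, ⟨hl, hmap⟩, _⟩ := huplp T.root l' hl''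
      refine ⟨T.pathTarget T.root l, Subtype.ext ?_⟩
      show (F.symm (T.pathTarget T.root l)).1.map p.e = l'
      rw [hFu ⟨l, hl⟩, hmap]
  · constructor
    · intro e₁ e₂ he
      have hfst : (F.symm (T.s e₁)).1.map p.e = (F.symm (T.s e₂)).1.map p.e := by
        have := congrArg (fun z => (Subtype.val z).1.1) he
        simpa using this
      have hsnd : p.e e₁ = p.e e₂ := by
        have := congrArg (fun z => (Subtype.val z).2) he
        simpa using this
      have hp1 : T.PathFrom T.root ((F.symm (T.s e₁)).1 ++ [e₁]) :=
        RGraph.pathFrom_append_single (F.symm (T.s e₁)).2 (hF _).symm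
      have hp2 : T.PathFrom T.root ((F.symm (T.s e₂)).1 ++ [e₂]) :=
        RGraph.pathFrom_append_single (F.symm (T.s e₂)).2 (hF _).symm
      have hmeq : ((F.symm (T.s e₁)).1 ++ [e₁]).map p.e
          = ((F.symm (T.s e₂)).1 ++ [e₂]).map p.e := by
        simp only [List.map_append, List.map_cons, List.map_nil, hfst, hsnd]
      have hA' : A.PathFrom (p.v T.root) (((F.symm (T.s e₁)).1 ++ [e₁]).map p.e) := by
        have := p.pathFrom_map hp1; rwa [p.root_eq] at this ⊢
      obtain ⟨l0, _, hu⟩ := huplp T.root _ hA'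
      have e1 : (F.symm (T.s e₁)).1 ++ [e₁] = l0 := hu _ ⟨hp1, rfl⟩
      have e2 : (F.symm (T.s e₂)).1 ++ [e₂] = l0 := hu _ ⟨hp2, hmeq.symm⟩
      have hPP : (F.symm (T.s e₁)).1 ++ [e₁] = (F.symm (T.s e₂)).1 ++ [e₂] := e1.trans e2.symm
      have := congrArg List.getLast? hPP
      simpa using this
    · rintro ⟨⟨⟨l', hl'⟩, e'⟩, hx⟩
      have hx' : A.s e' = A.pathTarget A.root l' := hx
      have hpath' : A.PathFrom (p.v T.root) (l' ++ [e']) := by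
        rw [p.root_eq]; exact RGraph.pathFrom_append_single hl' hx'
      obtain ⟨l, ⟨hl, hmap⟩, _⟩ := huplp T.root _ hpath'
      rcases List.eq_nil_or_concat l with rfl | ⟨m, e, rfl⟩
      · exact absurd hmap (by simp)
      · rw [List.concat_eq_append] at hl hmap
        rw [List.map_append] at hmap
        obtain ⟨hm, he⟩ := List.append_inj' hmap (by simp)
        have he' : p.e e = e' := by simpa using he
        have hse : T.s e = T.pathTarget T.root m := my_s_getLast hl
        have hFm : F.symm (T.s e) = ⟨m, myPathFrom_of_append hl⟩ := by
          rw [hse]; exact hFu ⟨m, myPathFrom_of_append hl⟩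
        refine ⟨e, Subtype.ext (Prod.ext (Subtype.ext ?_) ?_)⟩
        · show (F.symm (T.s e)).1.map p.e = l'
          rw [hFm]
          simpa using hm
        · exact he'
  · intro x
    show A.pathTarget A.root ((F.symm x).1.map p.e) = p.v x
    rw [← p.root_eq, p.pathTarget_map, hF]
  · intro e
    rfl
end

section
/- If 𝒜 and 𝒜' are two geometrically minimal DFAs whose path language trees are isomorphic to each other as unlabelled rooted trees (i.e., both are geometrically minimal automata for the same self-similar tree), then the underlying rooted directed multigraphs of 𝒜 and 𝒜' are isomorphic. -/
/-! ### Auxiliary development for Statement 14 -/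

section Aux

open Classical

variable {A B C : Type}

namespace PDFA

@[simp] lemma run_nil (M : PDFA A) (q : M.Q) : M.run q [] = some q := rfl

lemma run_cons (M : PDFA A) (q : M.Q) (a : A) (w : List A) :
    M.run q (a :: w) = (M.δ q a).bind fun p => M.run p w := rfl

lemma run_singleton (M : PDFA A) (q : M.Q) (a : A) :
    M.run q [a] = M.δ q a := by
  cases h : M.δ q a <;> simp [run_cons, h]

lemma isSome_nil (M : PDFA A) (q : M.Q) : (M.run q []).isSome := rfl

lemma isSome_delta_of_cons {M : PDFA A} {q : M.Q} {a : A} {w : List A}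
    (h : (M.run q (a :: w)).isSome) : (M.δ q a).isSome := by
  cases hd : M.δ q a with
  | none => rw [run_cons, hd] at h; simp at h
  | some p => simp

lemma run_cons_get {M : PDFA A} {q : M.Q} {a : A} (ha : (M.δ q a).isSome)
    (w : List A) : M.run q (a :: w) = M.run ((M.δ q a).get ha) w := by
  obtain ⟨p, hp⟩ := Option.isSome_iff_exists.mp ha
  simp [run_cons, hp]

end PDFA

/-- The "child" relation on words: `v` is obtained from `u` by appending one letter. -/
def ChildW {X : Type} (u v : List X) : Prop := ∃ a, v = u ++ [a]

lemma childW_cons {X : Type} (x : X) (u v : List X) :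
    ChildW (x :: u) (x :: v) ↔ ChildW u v := by
  simp [ChildW]

@[simp] lemma not_childW_nil {X : Type} (u : List X) : ¬ ChildW u ([] : List X) := by
  rintro ⟨a, ha⟩
  simp at ha

/-- The rooted trees of the languages of `M` from `q` and of `N` from `q'` are
isomorphic: there is a bijection of the languages fixing the empty word and
preserving the one-letter-extension relation in both directions. -/
def StEquiv (M : PDFA A) (q : M.Q) (N : PDFA B) (q' : N.Q) : Prop :=
  ∃ F : {w : List A // (M.run q w).isSome} ≃ {w : List B // (N.run q' w).isSome},
    (F ⟨[], M.isSome_nil q⟩).1 = [] ∧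
    ∀ x y, ChildW x.1 y.1 ↔ ChildW (F x).1 (F y).1

lemma stEquiv_refl (M : PDFA A) (q : M.Q) : StEquiv M q M q :=
  ⟨Equiv.refl _, rfl, fun _ _ => Iff.rfl⟩

lemma stEquiv_symm {M : PDFA A} {N : PDFA B} {q : M.Q} {q' : N.Q}
    (h : StEquiv M q N q') : StEquiv N q' M q := by
  obtain ⟨F, h0, hc⟩ := h
  refine ⟨F.symm, ?_, fun x y => ?_⟩
  · have : F ⟨[], M.isSome_nil q⟩ = ⟨[], N.isSome_nil q'⟩ := Subtype.ext h0
    rw [← this, Equiv.symm_apply_apply]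
  · have := hc (F.symm x) (F.symm y)
    rwa [Equiv.apply_symm_apply, Equiv.apply_symm_apply, Iff.comm] at this

lemma stEquiv_trans {M : PDFA A} {N : PDFA B} {P : PDFA C}
    {q : M.Q} {q' : N.Q} {q'' : P.Q}
    (h1 : StEquiv M q N q') (h2 : StEquiv N q' P q'') : StEquiv M q P q'' := by
  obtain ⟨F, hF0, hFc⟩ := h1
  obtain ⟨G, hG0, hGc⟩ := h2
  refine ⟨F.trans G, ?_, fun x y => ?_⟩
  · show (G (F _)).1 = []
    have : F ⟨[], M.isSome_nil q⟩ = ⟨[], N.isSome_nil q'⟩ := Subtype.ext hF0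
    rw [this, hG0]
  · exact (hFc x y).trans (hGc (F x) (F y))

lemma append_single_inj {X : Type} {u v : List X} {a b : X}
    (h : u ++ [a] = v ++ [b]) : u = v ∧ a = b := by
  have h1 := congrArg List.dropLast h
  simp only [List.dropLast_concat] at h1
  have h2 := congrArg List.getLast? h
  simp only [List.getLast?_concat] at h2
  exact ⟨h1, Option.some_injective _ h2⟩

lemma stEquiv_of_iso {M : PDFA A} {N : PDFA B}
    (h : RGraph.Iso M.pathTree N.pathTree) : StEquiv M M.init N N.init := by
  obtain ⟨p, hpv, hpe⟩ := h
  refine ⟨Equiv.ofBijective p.v hpv, congrArg Subtype.val p.root_eq, fun x y => ?_⟩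
  show ChildW x.1 y.1 ↔ ChildW (p.v x).1 (p.v y).1
  constructor
  · rintro ⟨a, ha⟩
    set e : M.pathTree.E := ⟨(x.1, a), by rw [← ha]; exact y.2⟩ with he
    have hs : M.pathTree.s e = x := Subtype.ext rfl
    have ht : M.pathTree.t e = y := Subtype.ext ha.symm
    refine ⟨(p.e e).1.2, ?_⟩
    have h1 : (p.v y).1 = (p.e e).1.1 ++ [(p.e e).1.2] := by
      rw [← ht, ← p.t_eq e]; rfl
    have h2 : (p.v x).1 = (p.e e).1.1 := by
      rw [← hs, ← p.s_eq e]; rfl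
    rw [h1, h2]
  · rintro ⟨b, hb⟩
    set e' : N.pathTree.E := ⟨((p.v x).1, b), by rw [← hb]; exact (p.v y).2⟩ with he'
    obtain ⟨e, hee⟩ := hpe.2 e'
    have hx : M.pathTree.s e = x := by
      apply hpv.1
      rw [← p.s_eq e, hee]
      exact Subtype.ext rfl
    have hy : M.pathTree.t e = y := by
      apply hpv.1
      rw [← p.t_eq e, hee]
      exact Subtype.ext hb.symm
    refine ⟨e.1.2, ?_⟩
    have h1 : y.1 = e.1.1 ++ [e.1.2] := by rw [← hy]; rfl
    have h2 : x.1 = e.1.1 := by rw [← hx]; rfl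
    rw [h1, h2]

lemma iso_of_stEquiv {M : PDFA A} {N : PDFA B}
    (h : StEquiv M M.init N N.init) : RGraph.Iso M.pathTree N.pathTree := by
  obtain ⟨F, h0, hc⟩ := h
  have key : ∀ x : M.pathTree.E,
      ∃ b, (F (M.pathTree.t x)).1 = (F (M.pathTree.s x)).1 ++ [b] :=
    fun x => (hc (M.pathTree.s x) (M.pathTree.t x)).mp ⟨x.1.2, rfl⟩
  set P : GraphHom M.pathTree N.pathTree :=
    { v := fun w => F w
      e := fun x => ⟨((F (M.pathTree.s x)).1, (key x).choose), by
        rw [← (key x).choose_spec]; exact (F (M.pathTree.t x)).2⟩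
      root_eq := Subtype.ext h0
      s_eq := fun x => Subtype.ext rfl
      t_eq := fun x => Subtype.ext (key x).choose_spec.symm } with hP
  refine ⟨P, F.bijective, ?_, ?_⟩
  · intro x y hxy
    have ht := congrArg N.pathTree.t hxy
    rw [P.t_eq, P.t_eq] at ht
    have ht' : M.pathTree.t x = M.pathTree.t y := F.injective (Subtype.ext (congrArg Subtype.val ht))
    have h12 := append_single_inj (congrArg Subtype.val ht' : x.1.1 ++ [x.1.2] = y.1.1 ++ [y.1.2])
    exact Subtype.ext (Prod.ext h12.1 h12.2)
  · rintro ⟨⟨u, b⟩, hy⟩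
    set xs := F.symm ⟨u, N.isSome_of_append hy⟩ with hxs
    set xt := F.symm ⟨u ++ [b], hy⟩ with hxt
    have hchild : ChildW xs.1 xt.1 := by
      rw [hc xs xt, hxs, hxt, Equiv.apply_symm_apply, Equiv.apply_symm_apply]
      exact ⟨b, rfl⟩
    obtain ⟨a, ha⟩ := hchild
    set x : M.pathTree.E := ⟨(xs.1, a), by rw [← ha]; exact xt.2⟩ with hx
    have hsx : M.pathTree.s x = xs := Subtype.ext rfl
    have htx : M.pathTree.t x = xt := Subtype.ext ha.symm
    refine ⟨x, ?_⟩
    have hFs : (F (M.pathTree.s x)).1 = u := by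
      rw [hsx, hxs, Equiv.apply_symm_apply]
    set c := (key x).choose with hcdef
    have hspec : (F (M.pathTree.t x)).1 = (F (M.pathTree.s x)).1 ++ [c] :=
      (key x).choose_spec
    rw [htx, hxt, Equiv.apply_symm_apply, hFs] at hspec
    have hb2 := (append_single_inj hspec.symm).2
    exact Subtype.ext (Prod.ext hFs hb2)

lemma isSome_run_singleton {M : PDFA A} {q : M.Q} {a : A}
    (h : (M.δ q a).isSome) : (M.run q [a]).isSome := by
  rw [M.run_singleton]; exact h

lemma stEquiv_step {M : PDFA A} {N : PDFA B} {q : M.Q} {q' : N.Q}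
    (h : StEquiv M q N q') :
    ∃ β : {a : A // (M.δ q a).isSome} ≃ {b : B // (N.δ q' b).isSome},
      ∀ a : {a : A // (M.δ q a).isSome},
        StEquiv M ((M.δ q a.1).get a.2) N ((N.δ q' (β a).1).get (β a).2) := by
  classical
  obtain ⟨F, h0, hc⟩ := h
  have h0' : (F.symm ⟨[], N.isSome_nil q'⟩).1 = [] := by
    have hr : F ⟨[], M.isSome_nil q⟩ = ⟨[], N.isSome_nil q'⟩ := Subtype.ext h0
    rw [← hr, Equiv.symm_apply_apply]
  have hc' : ∀ x y, ChildW x.1 y.1 ↔ ChildW (F.symm x).1 (F.symm y).1 := by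
    intro x y
    have := hc (F.symm x) (F.symm y)
    rwa [Equiv.apply_symm_apply, Equiv.apply_symm_apply, Iff.comm] at this
  -- the letter map and its inverse
  have bex : ∀ a : {a : A // (M.δ q a).isSome},
      ∃ b, (F ⟨[a.1], isSome_run_singleton a.2⟩).1 = [b] := by
    intro a
    obtain ⟨b, hb⟩ :=
      (hc ⟨[], M.isSome_nil q⟩ ⟨[a.1], isSome_run_singleton a.2⟩).mp ⟨a.1, rfl⟩
    exact ⟨b, by rw [hb, h0]; rfl⟩
  choose bf bfspec using bex
  have bfmem : ∀ a, (N.δ q' (bf a)).isSome := by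
    intro a
    have h2 := (F ⟨[a.1], isSome_run_singleton a.2⟩).2
    rw [bfspec a] at h2
    rwa [N.run_singleton] at h2
  have aex : ∀ b : {b : B // (N.δ q' b).isSome},
      ∃ a, (F.symm ⟨[b.1], isSome_run_singleton b.2⟩).1 = [a] := by
    intro b
    obtain ⟨a, ha⟩ :=
      (hc' ⟨[], N.isSome_nil q'⟩ ⟨[b.1], isSome_run_singleton b.2⟩).mp ⟨b.1, rfl⟩
    exact ⟨a, by rw [ha, h0']; rfl⟩
  choose af afspec using aex
  have afmem : ∀ b, (M.δ q (af b)).isSome := by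
    intro b
    have h2 := (F.symm ⟨[b.1], isSome_run_singleton b.2⟩).2
    rw [afspec b] at h2
    rwa [M.run_singleton] at h2
  have hba : ∀ a, af ⟨bf a, bfmem a⟩ = a.1 := by
    intro a
    have e1 : F ⟨[a.1], isSome_run_singleton a.2⟩ =
        ⟨[bf a], isSome_run_singleton (bfmem a)⟩ := Subtype.ext (bfspec a)
    have e2 := afspec ⟨bf a, bfmem a⟩
    rw [← e1, Equiv.symm_apply_apply] at e2
    simpa using e2.symm
  have hab : ∀ b, bf ⟨af b, afmem b⟩ = b.1 := by
    intro b
    have e1 : F.symm ⟨[b.1], isSome_run_singleton b.2⟩ =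
        ⟨[af b], isSome_run_singleton (afmem b)⟩ := Subtype.ext (afspec b)
    have e2 := bfspec ⟨af b, afmem b⟩
    rw [← e1, Equiv.apply_symm_apply] at e2
    simpa using e2.symm
  -- head lemmas
  have hd : ∀ (a : {a : A // (M.δ q a).isSome}) (w : List A)
      (hw : (M.run q (a.1 :: w)).isSome), ∃ u, (F ⟨a.1 :: w, hw⟩).1 = bf a :: u := by
    intro a w
    induction w using List.reverseRecOn with
    | nil => intro hw; exact ⟨[], bfspec a⟩
    | append_singleton u c ih =>
      intro hw
      have hw' : (M.run q (a.1 :: u)).isSome :=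
        M.isSome_of_append (u := a.1 :: u) (w := [c]) hw
      obtain ⟨u', hu'⟩ := ih hw'
      obtain ⟨c', hc2⟩ :=
        (hc ⟨a.1 :: u, hw'⟩ ⟨a.1 :: (u ++ [c]), hw⟩).mp ⟨c, by simp⟩
      exact ⟨u' ++ [c'], by rw [hc2, hu']; simp⟩
  have hd' : ∀ (b : {b : B // (N.δ q' b).isSome}) (w : List B)
      (hw : (N.run q' (b.1 :: w)).isSome), ∃ u, (F.symm ⟨b.1 :: w, hw⟩).1 = af b :: u := by
    intro b w
    induction w using List.reverseRecOn with
    | nil => intro hw; exact ⟨[], afspec b⟩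
    | append_singleton u c ih =>
      intro hw
      have hw' : (N.run q' (b.1 :: u)).isSome :=
        N.isSome_of_append (u := b.1 :: u) (w := [c]) hw
      obtain ⟨u', hu'⟩ := ih hw'
      obtain ⟨c', hc2⟩ :=
        (hc' ⟨b.1 :: u, hw'⟩ ⟨b.1 :: (u ++ [c]), hw⟩).mp ⟨c, by simp⟩
      exact ⟨u' ++ [c'], by rw [hc2, hu']; simp⟩
  refine ⟨⟨fun a => ⟨bf a, bfmem a⟩, fun b => ⟨af b, afmem b⟩,
      fun a => Subtype.ext (hba a), fun b => Subtype.ext (hab b)⟩, fun a => ?_⟩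
  show StEquiv M ((M.δ q a.1).get a.2) N ((N.δ q' (bf a)).get (bfmem a))
  have memA : ∀ w : List A, M.run q (a.1 :: w) = M.run ((M.δ q a.1).get a.2) w :=
    M.run_cons_get a.2
  have memB : ∀ w : List B, N.run q' (bf a :: w) = N.run ((N.δ q' (bf a)).get (bfmem a)) w :=
    N.run_cons_get (bfmem a)
  have memA' : ∀ w : {w : List A // (M.run ((M.δ q a.1).get a.2) w).isSome},
      (M.run q (a.1 :: w.1)).isSome := fun w => by rw [memA]; exact w.2
  have memB' : ∀ w : {w : List B // (N.run ((N.δ q' (bf a)).get (bfmem a)) w).isSome},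
      (N.run q' (bf a :: w.1)).isSome := fun w => by rw [memB]; exact w.2
  have K1 : ∀ w : {w : List A // (M.run ((M.δ q a.1).get a.2) w).isSome},
      ∃ u, (F ⟨a.1 :: w.1, memA' w⟩).1 = bf a :: u ∧
        (N.run ((N.δ q' (bf a)).get (bfmem a)) u).isSome := by
    intro w
    obtain ⟨u, hu⟩ := hd a w.1 (memA' w)
    refine ⟨u, hu, ?_⟩
    have h2 := (F ⟨a.1 :: w.1, memA' w⟩).2
    rw [hu] at h2
    rwa [memB] at h2
  choose cf hcf hcfmem using K1
  have K1' : ∀ w : {w : List B // (N.run ((N.δ q' (bf a)).get (bfmem a)) w).isSome},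
      ∃ u, (F.symm ⟨bf a :: w.1, memB' w⟩).1 = a.1 :: u ∧
        (M.run ((M.δ q a.1).get a.2) u).isSome := by
    intro w
    obtain ⟨u, hu⟩ := hd' ⟨bf a, bfmem a⟩ w.1 (memB' w)
    rw [hba a] at hu
    refine ⟨u, hu, ?_⟩
    have h2 := (F.symm ⟨bf a :: w.1, memB' w⟩).2
    rw [hu] at h2
    rwa [memA] at h2
  choose cg hcg hcgmem using K1'
  have linv : ∀ w, cg ⟨cf w, hcfmem w⟩ = w.1 := by
    intro w
    have e1 : F ⟨a.1 :: w.1, memA' w⟩ = ⟨bf a :: cf w, memB' ⟨cf w, hcfmem w⟩⟩ :=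
      Subtype.ext (hcf w)
    have e2 := hcg ⟨cf w, hcfmem w⟩
    rw [← e1, Equiv.symm_apply_apply] at e2
    simpa using e2.symm
  have rinv : ∀ w, cf ⟨cg w, hcgmem w⟩ = w.1 := by
    intro w
    have e1 : F.symm ⟨bf a :: w.1, memB' w⟩ = ⟨a.1 :: cg w, memA' ⟨cg w, hcgmem w⟩⟩ :=
      Subtype.ext (hcg w)
    have e2 := hcf ⟨cg w, hcgmem w⟩
    rw [← e1, Equiv.apply_symm_apply] at e2
    simpa using e2.symm
  refine ⟨⟨fun w => ⟨cf w, hcfmem w⟩, fun w => ⟨cg w, hcgmem w⟩,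
      fun w => Subtype.ext (linv w), fun w => Subtype.ext (rinv w)⟩, ?_, ?_⟩
  · -- empty word
    have e1 := hcf ⟨[], PDFA.isSome_nil _ _⟩
    have e2 : (F ⟨a.1 :: ([] : List A), memA' ⟨[], PDFA.isSome_nil _ _⟩⟩).1 = [bf a] :=
      bfspec a
    rw [e1] at e2
    simpa using e2
  · intro x y
    show ChildW x.1 y.1 ↔ ChildW (cf x) (cf y)
    calc ChildW x.1 y.1 ↔ ChildW (a.1 :: x.1) (a.1 :: y.1) := (childW_cons _ _ _).symm
      _ ↔ ChildW (F ⟨a.1 :: x.1, memA' x⟩).1 (F ⟨a.1 :: y.1, memA' y⟩).1 :=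
        hc ⟨a.1 :: x.1, memA' x⟩ ⟨a.1 :: y.1, memA' y⟩
      _ ↔ ChildW (bf a :: cf x) (bf a :: cf y) := by rw [hcf x, hcf y]
      _ ↔ ChildW (cf x) (cf y) := childW_cons _ _ _

/-- The data of a bisimulation between two DFAs along a relation `R`. -/
def BisimData (M : PDFA A) (N : PDFA B) (R : M.Q → N.Q → Prop) : Type :=
  ∀ q q', R q q' →
    {β : {a : A // (M.δ q a).isSome} ≃ {b : B // (N.δ q' b).isSome} //
      ∀ a, R ((M.δ q a.1).get a.2) ((N.δ q' (β a).1).get (β a).2)}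

lemma delta_get_congr {P : PDFA C} {s : P.Q} {u v : {c : C // (P.δ s c).isSome}}
    (h : u = v) : (P.δ s u.1).get u.2 = (P.δ s v.1).get v.2 := by cases h; rfl

/-- The swap of a bisimulation. -/
def BisimData.swap {M : PDFA A} {N : PDFA B} {R : M.Q → N.Q → Prop}
    (D : BisimData M N R) : BisimData N M (fun q' q => R q q') := fun q' q h =>
  ⟨((D q q' h).1).symm, fun b => by
    have h2 := (D q q' h).2 (((D q q' h).1).symm b)
    rwa [delta_get_congr (Equiv.apply_symm_apply (D q q' h).1 b)] at h2⟩

open Classical in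
/-- Transport of words along a bisimulation. -/
noncomputable def bisimMap (M : PDFA A) (N : PDFA B) (R : M.Q → N.Q → Prop)
    (D : BisimData M N R) : M.Q → N.Q → List A → List B
  | _, _, [] => []
  | q, q', a :: w =>
    if h : R q q' then
      if ha : (M.δ q a).isSome then
        ((D q q' h).1 ⟨a, ha⟩).1 ::
          bisimMap M N R D ((M.δ q a).get ha)
            ((N.δ q' ((D q q' h).1 ⟨a, ha⟩).1).get ((D q q' h).1 ⟨a, ha⟩).2) w
      else []
    else []

@[simp] lemma bisimMap_nil {M : PDFA A} {N : PDFA B} {R : M.Q → N.Q → Prop}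
    (D : BisimData M N R) (q : M.Q) (q' : N.Q) : bisimMap M N R D q q' [] = [] := by
  simp [bisimMap]

open Classical in
lemma bisimMap_cons {M : PDFA A} {N : PDFA B} {R : M.Q → N.Q → Prop}
    (D : BisimData M N R) {q : M.Q} {q' : N.Q} (h : R q q') {a : A}
    (ha : (M.δ q a).isSome) (w : List A) :
    bisimMap M N R D q q' (a :: w) =
      ((D q q' h).1 ⟨a, ha⟩).1 ::
        bisimMap M N R D ((M.δ q a).get ha)
          ((N.δ q' ((D q q' h).1 ⟨a, ha⟩).1).get ((D q q' h).1 ⟨a, ha⟩).2) w := by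
  rw [bisimMap]
  rw [dif_pos h, dif_pos ha]

lemma bisimMap_isSome {M : PDFA A} {N : PDFA B} {R : M.Q → N.Q → Prop}
    (D : BisimData M N R) :
    ∀ (w : List A) (q : M.Q) (q' : N.Q), R q q' → (M.run q w).isSome →
      (N.run q' (bisimMap M N R D q q' w)).isSome := by
  intro w
  induction w with
  | nil => intro q q' _ _; simp
  | cons a w ih =>
    intro q q' h hw
    have ha := PDFA.isSome_delta_of_cons hw
    rw [M.run_cons_get ha] at hw
    rw [bisimMap_cons D h ha]
    rw [N.run_cons_get ((D q q' h).1 ⟨a, ha⟩).2]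
    exact ih _ _ ((D q q' h).2 ⟨a, ha⟩) hw

lemma bisimMap_snoc {M : PDFA A} {N : PDFA B} {R : M.Q → N.Q → Prop}
    (D : BisimData M N R) (a : A) :
    ∀ (w : List A) (q : M.Q) (q' : N.Q), R q q' → (M.run q (w ++ [a])).isSome →
      ∃ b, bisimMap M N R D q q' (w ++ [a]) = bisimMap M N R D q q' w ++ [b] := by
  intro w
  induction w with
  | nil =>
    intro q q' h hw
    have ha := PDFA.isSome_delta_of_cons hw
    refine ⟨((D q q' h).1 ⟨a, ha⟩).1, ?_⟩
    rw [List.nil_append, bisimMap_cons D h ha]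
    simp
  | cons c w ih =>
    intro q q' h hw
    rw [List.cons_append] at hw
    have hc : (M.δ q c).isSome := PDFA.isSome_delta_of_cons hw
    rw [M.run_cons_get hc] at hw
    obtain ⟨b, hb⟩ := ih _ _ ((D q q' h).2 ⟨c, hc⟩) hw
    refine ⟨b, ?_⟩
    rw [List.cons_append, bisimMap_cons D h hc, bisimMap_cons D h hc, hb]
    rfl

lemma bisimMap_inv {M : PDFA A} {N : PDFA B} {R : M.Q → N.Q → Prop}
    (D : BisimData M N R) :
    ∀ (w : List A) (q : M.Q) (q' : N.Q) (h : R q q'), (M.run q w).isSome →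
      bisimMap N M _ D.swap q' q (bisimMap M N R D q q' w) = w := by
  intro w
  induction w with
  | nil => intro q q' h _; simp
  | cons a w ih =>
    intro q q' h hw
    have ha := PDFA.isSome_delta_of_cons hw
    rw [M.run_cons_get ha] at hw
    rw [bisimMap_cons D h ha]
    rw [bisimMap_cons D.swap h ((D q q' h).1 ⟨a, ha⟩).2]
    have hsymm : (D.swap q' q h).1 ⟨((D q q' h).1 ⟨a, ha⟩).1, ((D q q' h).1 ⟨a, ha⟩).2⟩
        = ⟨a, ha⟩ := by
      show ((D q q' h).1).symm ((D q q' h).1 ⟨a, ha⟩) = ⟨a, ha⟩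
      exact Equiv.symm_apply_apply _ _
    rw [hsymm]
    rw [ih _ _ ((D q q' h).2 ⟨a, ha⟩) hw]

/-- From a bisimulation relating `q` and `q'`, deduce that the language trees at
`q` and `q'` are isomorphic. -/
lemma bisim_stEquiv {M : PDFA A} {N : PDFA B} {R : M.Q → N.Q → Prop}
    (D : BisimData M N R) {q : M.Q} {q' : N.Q} (h : R q q') : StEquiv M q N q' := by
  classical
  have h' : (fun q' q => R q q') q' q := h
  have mem1 : ∀ w : {w : List A // (M.run q w).isSome},
      (N.run q' (bisimMap M N R D q q' w.1)).isSome :=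
    fun w => bisimMap_isSome D w.1 q q' h w.2
  have mem2 : ∀ w : {w : List B // (N.run q' w).isSome},
      (M.run q (bisimMap N M _ D.swap q' q w.1)).isSome :=
    fun w => bisimMap_isSome D.swap w.1 q' q h' w.2
  have linv : ∀ w : {w : List A // (M.run q w).isSome},
      bisimMap N M _ D.swap q' q (bisimMap M N R D q q' w.1) = w.1 :=
    fun w => bisimMap_inv D w.1 q q' h w.2
  have linv' : ∀ w : {w : List B // (N.run q' w).isSome},
      bisimMap M N _ D.swap.swap q q' (bisimMap N M _ D.swap q' q w.1) = w.1 :=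
    fun w => bisimMap_inv D.swap w.1 q' q h' w.2
  -- injectivity of the backwards map on the language
  have g2inj : ∀ u v : {w : List B // (N.run q' w).isSome},
      bisimMap N M _ D.swap q' q u.1 = bisimMap N M _ D.swap q' q v.1 → u.1 = v.1 := by
    intro u v huv
    rw [← linv' u, ← linv' v, huv]
  have rinv : ∀ w : {w : List B // (N.run q' w).isSome},
      bisimMap M N R D q q' (bisimMap N M _ D.swap q' q w.1) = w.1 := by
    intro w
    apply g2inj ⟨_, bisimMap_isSome D _ q q' h (mem2 w)⟩ w
    exact bisimMap_inv D _ q q' h (mem2 w)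
  refine ⟨⟨fun w => ⟨bisimMap M N R D q q' w.1, mem1 w⟩,
      fun w => ⟨bisimMap N M _ D.swap q' q w.1, mem2 w⟩,
      fun w => Subtype.ext (linv w), fun w => Subtype.ext (rinv w)⟩, by simp, ?_⟩
  intro x y
  show ChildW x.1 y.1 ↔ ChildW (bisimMap M N R D q q' x.1) (bisimMap M N R D q q' y.1)
  constructor
  · rintro ⟨a, ha⟩
    obtain ⟨b, hb⟩ := bisimMap_snoc D a x.1 q q' h (by rw [← ha]; exact y.2)
    exact ⟨b, by rw [ha, hb]⟩
  · rintro ⟨b, hb⟩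
    have hy' : (N.run q' (bisimMap M N R D q q' x.1 ++ [b])).isSome := by
      rw [← hb]; exact mem1 y
    obtain ⟨a, ha⟩ := bisimMap_snoc D.swap b (bisimMap M N R D q q' x.1) q' q h' hy'
    refine ⟨a, ?_⟩
    have e1 : bisimMap N M _ D.swap q' q (bisimMap M N R D q q' y.1) = y.1 := linv y
    rw [hb, ha, linv x] at e1
    exact e1.symm

open Classical in
/-- The restriction of a DFA to its reachable states. -/
noncomputable def PDFA.reachSub (M : PDFA A) : PDFA A where
  Q := {q : M.Q // ∃ w, M.run M.init w = some q}
  finQ := by have := M.finQ; exact Subtype.finite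
  neQ := ⟨⟨M.init, [], rfl⟩⟩
  δ := fun p a =>
    if h : (M.δ p.1 a).isSome then
      some ⟨(M.δ p.1 a).get h, by
        obtain ⟨w, hw⟩ := p.2
        refine ⟨w ++ [a], ?_⟩
        rw [M.run_append, hw]
        simp only [Option.bind_some]
        rw [M.run_singleton]
        exact (Option.some_get h).symm⟩
    else none
  init := ⟨M.init, [], rfl⟩

lemma geomMin_reachable (hFA : Finite A) (hNA : Nonempty A) {M : PDFA A}
    (hM : M.GeomMinimal) : ∀ q : M.Q, ∃ w, M.run M.init w = some q := by
  classical
  by_contra hcon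
  push_neg at hcon
  obtain ⟨q₀, hq₀⟩ := hcon
  have hiff : ∀ (p : M.reachSub.Q) (b : A),
      (M.δ p.1 b).isSome ↔ (M.reachSub.δ p b).isSome := by
    intro p b
    by_cases h : (M.δ p.1 b).isSome <;> simp [PDFA.reachSub, h]
  have hval : ∀ (p : M.reachSub.Q) (b : A) (hb' : (M.reachSub.δ p b).isSome)
      (hb : (M.δ p.1 b).isSome),
        ((M.reachSub.δ p b).get hb').1 = (M.δ p.1 b).get hb := by
    intro p b hb' hb
    obtain ⟨y, hy⟩ := Option.isSome_iff_exists.mp hb'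
    have hy2 := hy
    simp only [PDFA.reachSub] at hy2
    rw [dif_pos hb] at hy2
    have : y = ⟨(M.δ p.1 b).get hb, _⟩ := (Option.some_injective _ hy2).symm
    simp [hy, this]; rfl
  have D : BisimData M M.reachSub (fun q p => q = p.1) := by
    intro q p h
    subst h
    set γ : {a : A // (M.δ p.1 a).isSome} ≃ {b : A // (M.reachSub.δ p b).isSome} :=
      Equiv.subtypeEquiv (Equiv.refl A)
        (fun b => by rw [Equiv.refl_apply]; exact hiff p b) with hγdef
    refine ⟨γ, fun a => ?_⟩
    show (M.δ p.1 a.1).get a.2 = ((M.reachSub.δ p (γ a).1).get (γ a).2).1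
    exact (hval p (γ a).1 (γ a).2 (by exact a.2)).symm
  have hst : StEquiv M M.init M.reachSub M.reachSub.init := bisim_stEquiv D rfl
  have hle := hM A hFA hNA M.reachSub (iso_of_stEquiv hst)
  have hlt : Nat.card M.reachSub.Q < Nat.card M.Q := by
    have := M.finQ
    exact Finite.card_subtype_lt (x := q₀) (by push_neg; exact hq₀)
  omega

open Classical in
/-- The redirection map for merging the state `q₂` into the state `q₁`. -/
noncomputable def pdfaRedirect (M : PDFA A) (q₁ q₂ : M.Q) (hne : q₁ ≠ q₂) :
    M.Q → {q : M.Q // q ≠ q₂} := fun x => if h : x = q₂ then ⟨q₁, hne⟩ else ⟨x, h⟩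

/-- The DFA obtained by merging the state `q₂` into the state `q₁`. -/
noncomputable def PDFA.merge (M : PDFA A) (q₁ q₂ : M.Q) (hne : q₁ ≠ q₂) : PDFA A where
  Q := {q : M.Q // q ≠ q₂}
  finQ := by have := M.finQ; exact Subtype.finite
  neQ := ⟨⟨q₁, hne⟩⟩
  δ := fun p a => (M.δ p.1 a).map (pdfaRedirect M q₁ q₂ hne)
  init := pdfaRedirect M q₁ q₂ hne M.init

lemma geomMin_inj (hFA : Finite A) (hNA : Nonempty A) {M : PDFA A}
    (hM : M.GeomMinimal) {q₁ q₂ : M.Q} (he : StEquiv M q₁ M q₂) : q₁ = q₂ := by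
  classical
  by_contra hne
  have hrEq : ∀ x : M.Q, StEquiv M x M (pdfaRedirect M q₁ q₂ hne x).1 := by
    intro x
    by_cases h : x = q₂
    · subst h
      simp only [pdfaRedirect, dif_pos rfl]
      exact stEquiv_symm he
    · simp only [pdfaRedirect, dif_neg h]
      exact stEquiv_refl M x
  have hiff : ∀ (p : (M.merge q₁ q₂ hne).Q) (b : A),
      (M.δ p.1 b).isSome ↔ ((M.merge q₁ q₂ hne).δ p b).isSome := by
    intro p b
    simp [PDFA.merge]
  have hval : ∀ (p : (M.merge q₁ q₂ hne).Q) (b : A)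
      (hb' : ((M.merge q₁ q₂ hne).δ p b).isSome) (hb : (M.δ p.1 b).isSome),
        ((M.merge q₁ q₂ hne).δ p b).get hb' =
          pdfaRedirect M q₁ q₂ hne ((M.δ p.1 b).get hb) := by
    intro p b hb' hb
    obtain ⟨x, hx⟩ := Option.isSome_iff_exists.mp hb
    have hx2 : (M.merge q₁ q₂ hne).δ p b = some (pdfaRedirect M q₁ q₂ hne x) := by
      simp [PDFA.merge, hx]
    simp [hx, hx2]; rfl
  have D : BisimData M (M.merge q₁ q₂ hne) (fun q p => StEquiv M q M p.1) := by
    intro q p h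
    set β := (stEquiv_step h).choose with hβdef
    have hβ := (stEquiv_step h).choose_spec
    set γ : {a : A // (M.δ q a).isSome} ≃
        {b : A // ((M.merge q₁ q₂ hne).δ p b).isSome} :=
      β.trans (Equiv.subtypeEquiv (Equiv.refl A)
        (fun b => by rw [Equiv.refl_apply]; exact hiff p b)) with hγdef
    refine ⟨γ, fun a => ?_⟩
    show StEquiv M ((M.δ q a.1).get a.2) M
      (((M.merge q₁ q₂ hne).δ p (γ a).1).get (γ a).2).1
    rw [hval p (γ a).1 (γ a).2 (by exact (β a).2)]
    exact stEquiv_trans (hβ a) (hrEq ((M.δ p.1 (β a).1).get (β a).2))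
  have hst : StEquiv M M.init (M.merge q₁ q₂ hne) (M.merge q₁ q₂ hne).init :=
    bisim_stEquiv D (hrEq M.init)
  have hle := hM A hFA hNA (M.merge q₁ q₂ hne) (iso_of_stEquiv hst)
  have hlt : Nat.card (M.merge q₁ q₂ hne).Q < Nat.card M.Q := by
    have := M.finQ
    exact Finite.card_subtype_lt (x := q₂) (by simp)
  omega

lemma reach_partner {M : PDFA A} {N : PDFA B} (h : StEquiv M M.init N N.init) :
    ∀ (w : List A) (q : M.Q), M.run M.init w = some q → ∃ q', StEquiv M q N q' := by
  intro w
  induction w using List.reverseRecOn with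
  | nil =>
    intro q hq
    have : M.init = q := by simpa using hq
    subst this
    exact ⟨N.init, h⟩
  | append_singleton w a ih =>
    intro q hq
    rw [M.run_append] at hq
    cases hw : M.run M.init w with
    | none => rw [hw] at hq; simp at hq
    | some p =>
      rw [hw] at hq
      simp only [Option.bind_some] at hq
      rw [M.run_singleton] at hq
      obtain ⟨p', hp'⟩ := ih p hw
      obtain ⟨β, hβ⟩ := stEquiv_step hp'
      have ha : (M.δ p a).isSome := by rw [hq]; rfl
      have hget : (M.δ p a).get ha = q := by simp [hq]
      refine ⟨(N.δ p' (β ⟨a, ha⟩).1).get (β ⟨a, ha⟩).2, ?_⟩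
      rw [← hget]
      exact hβ ⟨a, ha⟩

end Aux

/-- Uniqueness of geometrically minimal DFAs. If `M` and `N` are
geometrically minimal DFAs whose path language trees are isomorphic as unlabelled
rooted trees, then the underlying rooted directed multigraphs of `M` and `N` are
isomorphic. -/
theorem stmt14 {A B : Type} (hA : Finite A) (hA' : Nonempty A)
    (hB : Finite B) (hB' : Nonempty B) (M : PDFA A) (N : PDFA B)
    (hM : M.GeomMinimal) (hN : N.GeomMinimal)
    (h : RGraph.Iso M.pathTree N.pathTree) :
    RGraph.Iso M.underlying N.underlying := by
  classical
  have hS : StEquiv M M.init N N.init := stEquiv_of_iso h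
  have hS' : StEquiv N N.init M M.init := stEquiv_symm hS
  have hreachM := geomMin_reachable hA hA' hM
  have hreachN := geomMin_reachable hB hB' hN
  have exM : ∀ q : M.Q, ∃ q', StEquiv M q N q' := fun q => by
    obtain ⟨w, hw⟩ := hreachM q
    exact reach_partner hS w q hw
  have exN : ∀ q' : N.Q, ∃ q, StEquiv N q' M q := fun q' => by
    obtain ⟨w, hw⟩ := hreachN q'
    exact reach_partner hS' w q' hw
  set φ : M.Q → N.Q := fun q => (exM q).choose with hφdef
  have hφ : ∀ q, StEquiv M q N (φ q) := fun q => (exM q).choose_spec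
  set ψ : N.Q → M.Q := fun q' => (exN q').choose with hψdef
  have hψ : ∀ q', StEquiv N q' M (ψ q') := fun q' => (exN q').choose_spec
  have uniqφ : ∀ (q : M.Q) (t : N.Q), StEquiv M q N t → t = φ q := fun q t ht =>
    geomMin_inj hB hB' hN (stEquiv_trans (stEquiv_symm ht) (hφ q))
  have uniqψ : ∀ (q' : N.Q) (t : M.Q), StEquiv N q' M t → t = ψ q' := fun q' t ht =>
    geomMin_inj hA hA' hM (stEquiv_trans (stEquiv_symm ht) (hψ q'))
  have hψφ : ∀ q, ψ (φ q) = q := fun q => (uniqψ (φ q) q (stEquiv_symm (hφ q))).symm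
  have hφψ : ∀ q', φ (ψ q') = q' := fun q' => (uniqφ (ψ q') q' (stEquiv_symm (hψ q'))).symm
  have hinit : φ M.init = N.init := (uniqφ M.init N.init hS).symm
  set βf : ∀ q : M.Q, {a : A // (M.δ q a).isSome} ≃ {b : B // (N.δ (φ q) b).isSome} :=
    fun q => (stEquiv_step (hφ q)).choose with hβdef
  have hβ : ∀ (q : M.Q) (a : {a : A // (M.δ q a).isSome}),
      StEquiv M ((M.δ q a.1).get a.2) N ((N.δ (φ q) (βf q a).1).get (βf q a).2) :=
    fun q => (stEquiv_step (hφ q)).choose_spec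
  have htarget : ∀ (q : M.Q) (a : {a : A // (M.δ q a).isSome}),
      (N.δ (φ q) (βf q a).1).get (βf q a).2 = φ ((M.δ q a.1).get a.2) :=
    fun q a => uniqφ _ _ (hβ q a)
  refine ⟨⟨φ, fun x => ⟨(φ x.1.1, (βf x.1.1 ⟨x.1.2, x.2⟩).1),
      (βf x.1.1 ⟨x.1.2, x.2⟩).2⟩, hinit, fun x => rfl, fun x => ?_⟩,
      (Equiv.mk φ ψ hψφ hφψ).bijective, ?_, ?_⟩
  · exact htarget x.1.1 ⟨x.1.2, x.2⟩
  · rintro ⟨⟨qx, ax⟩, hx⟩ ⟨⟨qy, ay⟩, hy⟩ hxy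
    have h1 : φ qx = φ qy :=
      congrArg (fun z : {x : N.Q × B // (N.δ x.1 x.2).isSome} => z.1.1) hxy
    have hq : qx = qy := (Equiv.mk φ ψ hψφ hφψ).injective h1
    subst hq
    have h2 : (βf qx ⟨ax, hx⟩).1 = (βf qx ⟨ay, hy⟩).1 :=
      congrArg (fun z : {x : N.Q × B // (N.δ x.1 x.2).isSome} => z.1.2) hxy
    have h4 := (βf qx).injective (Subtype.ext h2)
    have h5 : ax = ay := congrArg Subtype.val h4
    exact Subtype.ext (Prod.ext rfl h5)
  · rintro ⟨⟨p, b⟩, hb⟩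
    have hp : φ (ψ p) = p := hφψ p
    have hb' : (N.δ (φ (ψ p)) b).isSome := by rw [hp]; exact hb
    obtain ⟨a, ha⟩ := (βf (ψ p)).surjective ⟨b, hb'⟩
    refine ⟨⟨(ψ p, a.1), a.2⟩, ?_⟩
    apply Subtype.ext
    apply Prod.ext
    · exact hp
    · exact congrArg Subtype.val ha
end
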